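/- Let d ∈ ℕ, M_J ≥ 0, β ∈ (0,1] and λ ≥ 0. Let J : ℝ^d → ℝ be differentiable with gradient ∇J satisfying ‖∇J(θ₁) − ∇J(θ₂)‖ ≤ M_J·(‖θ₁ − θ₂‖^β + ‖θ₁ − θ₂‖ + λ) for all θ₁, θ₂ ∈ ℝ^d. Then for all θ₁, θ₂ ∈ ℝ^d, |J(θ₁) − J(θ₂) − ⟨∇J(θ₂), θ₁ − θ₂⟩| ≤ M_J·(‖θ₁ − θ₂‖^{1+β} + ‖θ₁ − θ₂‖² + λ·‖θ₁ − θ₂‖). -/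

import Mathlib

open scoped RealInnerProductSpace

/-- Descent-lemma-type smoothness (the paper's Lemma 3): if the gradient of `J`
satisfies the generalized Hölder bound
`‖∇J(θ₁)-∇J(θ₂)‖ ≤ M_J(‖θ₁-θ₂‖^β + ‖θ₁-θ₂‖ + λ)`, then
`|J(θ₁)-J(θ₂)-⟨∇J(θ₂),θ₁-θ₂⟩| ≤ M_J(‖θ₁-θ₂‖^{1+β} + ‖θ₁-θ₂‖² + λ‖θ₁-θ₂‖)`. -/
theorem stmt5 (d : ℕ) (MJ : ℝ) (hMJ : 0 ≤ MJ) (β : ℝ) (hβ : β ∈ Set.Ioc (0 : ℝ) 1)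
    (lam : ℝ) (hlam : 0 ≤ lam)
    (J : EuclideanSpace ℝ (Fin d) → ℝ)
    (J' : EuclideanSpace ℝ (Fin d) → EuclideanSpace ℝ (Fin d))
    (hdiff : ∀ θ, HasGradientAt J (J' θ) θ)
    (hHolder : ∀ θ₁ θ₂ : EuclideanSpace ℝ (Fin d),
      ‖J' θ₁ - J' θ₂‖ ≤ MJ * (‖θ₁ - θ₂‖ ^ β + ‖θ₁ - θ₂‖ + lam)) :
    ∀ θ₁ θ₂ : EuclideanSpace ℝ (Fin d),
      |J θ₁ - J θ₂ - ⟪J' θ₂, θ₁ - θ₂⟫|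
        ≤ MJ * (‖θ₁ - θ₂‖ ^ (1 + β) + ‖θ₁ - θ₂‖ ^ 2 + lam * ‖θ₁ - θ₂‖) := by
  obtain ⟨hβ0, hβ1⟩ := hβ
  intro θ₁ θ₂
  set v : EuclideanSpace ℝ (Fin d) := θ₁ - θ₂ with hv
  set c : ℝ := ⟪J' θ₂, v⟫ with hc
  set f : ℝ → ℝ := fun t => J (θ₂ + t • v) - t * c with hf
  set C : ℝ := MJ * (‖v‖ ^ β + ‖v‖ + lam) with hC
  have hline : ∀ t : ℝ, HasDerivAt (fun s : ℝ => θ₂ + s • v) v t := by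
    intro t
    simpa using ((hasDerivAt_id t).smul_const v).const_add θ₂
  have hf' : ∀ t : ℝ, HasDerivAt f (⟪J' (θ₂ + t • v) - J' θ₂, v⟫) t := by
    intro t
    have h1 : HasDerivAt (fun s : ℝ => J (θ₂ + s • v)) (⟪J' (θ₂ + t • v), v⟫) t := by
      have := (hdiff (θ₂ + t • v)).hasFDerivAt.comp_hasDerivAt t (hline t)
      exact this
    have h2 : HasDerivAt (fun s : ℝ => s * c) c t := by
      simpa using (hasDerivAt_id t).mul_const c
    exact (h1.sub h2).congr_deriv (by rw [hc, inner_sub_left])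
  have hbound : ∀ t ∈ Set.Icc (0:ℝ) 1, ‖⟪J' (θ₂ + t • v) - J' θ₂, v⟫‖ ≤ C * ‖v‖ := by
    intro t ht
    have h1 : ‖⟪J' (θ₂ + t • v) - J' θ₂, v⟫‖ ≤ ‖J' (θ₂ + t • v) - J' θ₂‖ * ‖v‖ :=
      norm_inner_le_norm _ _
    have h2 : ‖J' (θ₂ + t • v) - J' θ₂‖ ≤ MJ * (‖t • v‖ ^ β + ‖t • v‖ + lam) := by
      simpa using hHolder (θ₂ + t • v) θ₂
    have htv : ‖t • v‖ ≤ ‖v‖ := by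
      rw [norm_smul]
      calc ‖t‖ * ‖v‖ ≤ 1 * ‖v‖ := by
            apply mul_le_mul_of_nonneg_right _ (norm_nonneg v)
            rw [Real.norm_eq_abs, abs_le]; constructor <;> linarith [ht.1, ht.2]
        _ = ‖v‖ := one_mul _
    have h3 : ‖t • v‖ ^ β ≤ ‖v‖ ^ β := Real.rpow_le_rpow (norm_nonneg _) htv hβ0.le
    have h4 : ‖J' (θ₂ + t • v) - J' θ₂‖ ≤ C := by
      refine h2.trans ?_
      apply mul_le_mul_of_nonneg_left _ hMJ
      linarith
    calc ‖⟪J' (θ₂ + t • v) - J' θ₂, v⟫‖ ≤ ‖J' (θ₂ + t • v) - J' θ₂‖ * ‖v‖ := h1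
      _ ≤ C * ‖v‖ := mul_le_mul_of_nonneg_right h4 (norm_nonneg v)
  have key : ‖f 1 - f 0‖ ≤ C * ‖v‖ * ‖(1:ℝ) - 0‖ := by
    apply (convex_Icc (0:ℝ) 1).norm_image_sub_le_of_norm_hasDerivWithin_le
      (fun t ht => (hf' t).hasDerivWithinAt) hbound
      (Set.left_mem_Icc.2 zero_le_one) (Set.right_mem_Icc.2 zero_le_one)
  have hfval : f 1 - f 0 = J θ₁ - J θ₂ - c := by
    simp [hf, hv]; ring
  have hLHS : |J θ₁ - J θ₂ - c| ≤ C * ‖v‖ := by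
    have := key
    rw [hfval] at this
    simpa using this
  refine hLHS.trans ?_
  have hsplit : ‖v‖ ^ (1 + β) = ‖v‖ * ‖v‖ ^ β := by
    rw [Real.rpow_add' (norm_nonneg v) (by linarith), Real.rpow_one]
  rw [hC, hsplit]
  ring_nf
  nlinarith [norm_nonneg v, Real.rpow_nonneg (norm_nonneg v) β]
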